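/- Let f be a waning function with f(ω) = 0, let n ∈ ℕ and X a finite subset of ℕ. If g is a partial injection on ℕ with |im(g) \ X| ≥ n and |X ∩ im(g)| ≥ f(n), then f(|g|) = 0. -/

import Mathlib

open Set Classical

noncomputable section

/-- A partial injection (partial bijection) on ℕ, viewed as a set of pairs. -/
def IsPInj (g : Set (ℕ × ℕ)) : Prop :=
  ∀ ⦃a b c d : ℕ⦄, (a, b) ∈ g → (c, d) ∈ g → (a = c ↔ b = d)

/-- Domain of a partial injection. -/
def pdom (g : Set (ℕ × ℕ)) : Set ℕ := {x | ∃ y, (x, y) ∈ g}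

/-- Image of a partial injection. -/
def pim (g : Set (ℕ × ℕ)) : Set ℕ := {y | ∃ x, (x, y) ∈ g}

/-- Restriction of a partial injection to `{0, …, r-1}`. -/
def pres (g : Set (ℕ × ℕ)) (r : ℕ) : Set (ℕ × ℕ) := {p ∈ g | p.1 < r}

/-- A waning function `f : ω + 1 → ω + 1`. -/
def Waning (f : ℕ∞ → ℕ∞) : Prop :=
  Antitone f ∧
    ((∀ i, f i = ⊤) ∨
      ((∃ i : ℕ, f i ≠ ⊤) ∧
        ∀ j : ℕ, f j ≠ 0 → f j ≠ ⊤ → f ((j + 1 : ℕ)) < f j))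

private lemma waning_aux (f : ℕ∞ → ℕ∞) (hmono : Antitone f)
    (hd : ∀ j : ℕ, f j ≠ 0 → f j ≠ ⊤ → f ((j + 1 : ℕ)) < f j) :
    ∀ k : ℕ, ∀ n : ℕ, f n ≤ k → f ((n + k : ℕ)) = 0 := by
  intro k
  induction k with
  | zero =>
    intro n hn
    simpa using le_antisymm (by simpa using hn) zero_le
  | succ k ih =>
    intro n hn
    by_cases h0 : f n = 0
    · have : f ((n + (k + 1) : ℕ)) ≤ f n := hmono (by exact_mod_cast Nat.le_add_right n (k + 1))
      simpa [h0] using le_antisymm (this.trans_eq h0) zero_le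
    · have hne : f n ≠ ⊤ := by
        intro ht
        rw [ht] at hn
        exact absurd (top_le_iff.mp hn) (by exact_mod_cast ENat.coe_ne_top (k + 1))
      have hlt : f ((n + 1 : ℕ)) < f n := hd n h0 hne
      have hlt2 : f ((n + 1 : ℕ)) < ((k : ℕ∞) + 1) := lt_of_lt_of_le hlt (by exact_mod_cast hn)
      have hle : f ((n + 1 : ℕ)) ≤ k := by
        have hnt : f ((n + 1 : ℕ)) ≠ ⊤ := hlt2.ne_top
        lift f ((n + 1 : ℕ)) to ℕ using hnt with m
        exact_mod_cast Nat.lt_succ_iff.mp (by exact_mod_cast hlt2)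
      have := ih (n + 1) hle
      have heq : n + 1 + k = n + (k + 1) := by ring
      rwa [heq] at this

/-- Let `f` be waning with `f(ω) = 0`, `n ∈ ℕ`, `X ⊆ ℕ` finite. If `g` is a partial
injection with `|im(g) \ X| ≥ n` and `|X ∩ im(g)| ≥ f(n)`, then `f(|g|) = 0`. -/
theorem waning_apply_encard_eq_zero (f : ℕ∞ → ℕ∞) (hf : Waning f) (hftop : f ⊤ = 0)
    (n : ℕ) (X : Finset ℕ) (g : Set (ℕ × ℕ)) (hg : IsPInj g)
    (h1 : (n : ℕ∞) ≤ (pim g \ ↑X).encard)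
    (h2 : f n ≤ ((↑X : Set ℕ) ∩ pim g).encard) :
    f g.encard = 0 := by
  obtain ⟨hmono, hcase⟩ := hf
  rcases hcase with hconst | ⟨_, hd⟩
  · exact absurd (hconst ⊤) (by simp [hftop])
  -- f n is finite
  have hXfin : ((↑X : Set ℕ) ∩ pim g).encard ≤ (X.card : ℕ∞) := by
    calc ((↑X : Set ℕ) ∩ pim g).encard ≤ (↑X : Set ℕ).encard :=
          Set.encard_mono Set.inter_subset_left
      _ = X.card := Set.encard_coe_eq_coe_finsetCard X
  have hfn_ne : f n ≠ ⊤ := by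
    intro ht
    rw [ht] at h2
    exact absurd (h2.trans hXfin) (by simp)
  lift f n to ℕ using hfn_ne with k hk
  -- |pim g| ≥ n + k
  have hsub : (pim g \ ↑X) ∪ ((↑X : Set ℕ) ∩ pim g) ⊆ pim g := by
    intro x hx
    rcases hx with hx | hx
    · exact hx.1
    · exact hx.2
  have hdisj : Disjoint (pim g \ (↑X : Set ℕ)) ((↑X : Set ℕ) ∩ pim g) := by
    rw [Set.disjoint_left]
    rintro x ⟨_, hx2⟩ ⟨hx3, _⟩
    exact hx2 hx3
  have hpim : (n + k : ℕ∞) ≤ (pim g).encard := by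
    calc (n + k : ℕ∞) ≤ (pim g \ ↑X).encard + ((↑X : Set ℕ) ∩ pim g).encard :=
          add_le_add h1 (hk ▸ h2)
      _ = ((pim g \ ↑X) ∪ ((↑X : Set ℕ) ∩ pim g)).encard := (Set.encard_union_eq hdisj).symm
      _ ≤ (pim g).encard := Set.encard_mono hsub
  -- |pim g| ≤ |g|
  have himg : pim g = Prod.snd '' g := by
    ext y; simp [pim, Set.mem_image, Prod.exists]
  have hle : (pim g).encard ≤ g.encard := by
    rw [himg]; exact Set.encard_image_le _ _
  have hnk : ((n + k : ℕ) : ℕ∞) ≤ g.encard := by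
    push_cast
    exact hpim.trans hle
  have h0 : f ((n + k : ℕ)) = 0 := waning_aux f hmono hd k n (le_of_eq hk.symm)
  exact le_antisymm ((hmono hnk).trans_eq h0) zero_le
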